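/- Suppose the polynomial P(t) has exactly d + 1 nonzero coefficients. Let 𝒫′ ⊆ {0, 1, …, n} denote the set of exponents i for which the coefficient of t^i in P vanishes. Then 𝒫′ has exactly n − d elements, and c(i) = 2^{n₂} · 3^{n₃} ⋯ r^{n_r} · ∏_{j ∈ 𝒫′} (j − i) as polynomials in the variable i. In particular, c has n − d mutually different integral zeros located in {0, …, n}. -/

import Mathlib

open Polynomial Finset

/-- `d = n₁ + ⋯ + n_r`. -/
def dTot (r : ℕ) (np : ℕ → ℕ) : ℕ := ∑ p ∈ Finset.Icc 1 r, np p

/-- `n = 1·n₁ + 2·n₂ + ⋯ + r·n_r`, the homogeneous dimension. -/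
def nHom (r : ℕ) (np : ℕ → ℕ) : ℕ := ∑ p ∈ Finset.Icc 1 r, p * np p

/-- `P(t) = ∏_{p=1}^{r} (1 − t^p)^{n_p}`. -/
noncomputable def Ppoly (r : ℕ) (np : ℕ → ℕ) : Polynomial ℚ :=
  ∏ p ∈ Finset.Icc 1 r, (1 - X ^ p) ^ np p

/-- `∏_{p=2}^{r} (1 + t + ⋯ + t^{p−1})^{n_p}`, whose coefficients are the `a_l`. -/
noncomputable def Apoly (r : ℕ) (np : ℕ → ℕ) : Polynomial ℚ :=
  ∏ p ∈ Finset.Icc 2 r, (∑ j ∈ Finset.range p, X ^ j) ^ np p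

/-- The coefficient `a_l`. -/
noncomputable def aCoeff (r : ℕ) (np : ℕ → ℕ) (l : ℕ) : ℚ := (Apoly r np).coeff l

/-- `Q_l(i) = ∏_{j=0}^{l−1} (j − i) · ∏_{j=d+l+1}^{n} (j − i)`. -/
def Qval (r : ℕ) (np : ℕ → ℕ) (l : ℕ) (i : ℚ) : ℚ :=
  (∏ j ∈ Finset.range l, ((j : ℚ) - i)) *
    ∏ j ∈ Finset.Icc (dTot r np + l + 1) (nHom r np), ((j : ℚ) - i)

/-- `c(i) = ∑_{l=0}^{n−d} a_l · Q_l(i)`. -/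
noncomputable def cVal (r : ℕ) (np : ℕ → ℕ) (i : ℚ) : ℚ :=
  ∑ l ∈ Finset.range (nHom r np - dTot r np + 1), aCoeff r np l * Qval r np l i


lemma aux1 : ∀ (a b : ℕ), a ≤ b →
    (∏ m ∈ Finset.range a, ((b:ℚ) - m)) * ((b - a).factorial : ℚ) = (b.factorial : ℚ) := by
  intro a
  induction a with
  | zero => simp
  | succ a ih =>
    intro b hab
    have hab' : a ≤ b := le_of_lt hab
    rw [Finset.prod_range_succ]
    have h1 : b - a = (b - (a+1)) + 1 := by omega
    have key := ih b hab'
    rw [h1, Nat.factorial_succ] at key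
    push_cast at key ⊢
    have hc : ((b - (a+1) : ℕ) : ℚ) = (b:ℚ) - (a+1) := by
      rw [Nat.cast_sub hab]; push_cast; ring
    rw [hc] at key
    nlinarith [key]

lemma aux2 (j u : ℕ) (hju : j ≤ u) : ∀ (n : ℕ), u ≤ n →
    (∏ m ∈ Finset.Icc (u+1) n, ((m:ℚ) - j)) * ((u - j).factorial : ℚ)
      = ((n - j).factorial : ℚ) := by
  intro n
  induction n with
  | zero => intro h; have hu : u = 0 := by omega
            subst hu; simp
  | succ n ih =>
    intro hun
    rcases Nat.lt_or_ge u (n+1) with hlt | hge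
    · have hun' : u ≤ n := by omega
      rw [Finset.prod_Icc_succ_top (by omega), mul_comm (∏ m ∈ Finset.Icc (u+1) n, ((m:ℚ) - j)) _]
      rw [mul_comm] at ih
      have key := ih hun'
      have h1 : n + 1 - j = (n - j) + 1 := by omega
      rw [h1, Nat.factorial_succ]
      push_cast at key ⊢
      have hc : ((n - j : ℕ) : ℚ) = (n:ℚ) - j := by
        rw [Nat.cast_sub (by omega)]
      rw [hc]
      nlinarith [key]
    · have hu : u = n+1 := by omega
      subst hu
      simp

lemma coeff_one_sub_X_pow (d k : ℕ) :
    ((1 - (X:ℚ[X]))^d).coeff k = (-1)^k * (d.choose k : ℚ) := by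
  have h : (1 - (X:ℚ[X]))^d = ∑ m ∈ Finset.range (d+1), C ((-1)^m * (d.choose m : ℚ)) * X^m := by
    rw [sub_eq_add_neg, add_comm, add_pow]
    apply Finset.sum_congr rfl
    intro m hm
    rw [neg_pow]
    simp [C_mul, mul_comm, mul_assoc, mul_left_comm]
  rw [h, finset_sum_coeff]
  simp only [coeff_C_mul, coeff_X_pow]
  rcases Nat.lt_or_ge k (d+1) with hk | hk
  · rw [Finset.sum_eq_single k]
    · simp
    · intro b _ hbk; simp [Ne.symm hbk]
    · intro hnk; exact absurd (Finset.mem_range.2 hk) hnk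
  · rw [Finset.sum_eq_zero, Nat.choose_eq_zero_of_lt (by omega)]
    · simp
    · intro b hb
      have hbk : b ≠ k := by simp at hb; omega
      simp [hbk, Ne.symm hbk]

lemma geomS_monic (p : ℕ) (hp : 1 ≤ p) : (∑ j ∈ Finset.range p, (X:ℚ[X])^j).Monic :=
  monic_geom_sum_X (by omega)

lemma geomS_natDegree (p : ℕ) (hp : 1 ≤ p) :
    (∑ j ∈ Finset.range p, (X:ℚ[X])^j).natDegree = p - 1 := by
  apply le_antisymm
  · apply Polynomial.natDegree_sum_le_of_forall_le
    intro i hi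
    simp only [natDegree_X_pow]
    simp at hi; omega
  · apply Polynomial.le_natDegree_of_ne_zero
    rw [finset_sum_coeff]
    rw [Finset.sum_eq_single (p-1)]
    · simp
    · intro b hb hbp; rw [coeff_X_pow]; simp only [ite_eq_right_iff]; intro hc; omega
    · intro hn; exact absurd (Finset.mem_range.2 (by omega)) hn

lemma Apoly_monic (r : ℕ) (np : ℕ → ℕ) : (Apoly r np).Monic := by
  apply monic_prod_of_monic
  intro p hp
  exact (geomS_monic p (by simp at hp; omega)).pow _

lemma nHom_eq (r : ℕ) (np : ℕ → ℕ) :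
    nHom r np = dTot r np + ∑ p ∈ Finset.Icc 2 r, (p-1) * np p := by
  have h2 : ∑ p ∈ Finset.Icc 2 r, (p-1) * np p = ∑ p ∈ Finset.Icc 1 r, (p-1) * np p := by
    apply Finset.sum_subset
    · intro x hx; simp at hx ⊢; omega
    · intro x hx hx2; simp at hx hx2
      have : x = 1 := by omega
      simp [this]
  rw [h2, dTot, nHom, ← Finset.sum_add_distrib]
  apply Finset.sum_congr rfl
  intro p hp
  simp at hp
  have hp1 := hp.1
  have hle : np p ≤ p * np p := Nat.le_mul_of_pos_left _ (by omega)
  have h3 : (p-1) * np p = p * np p - np p := Nat.sub_one_mul _ _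
  omega
lemma dTot_le_nHom (r : ℕ) (np : ℕ → ℕ) : dTot r np ≤ nHom r np := by
  rw [nHom_eq]; omega

lemma Apoly_natDegree (r : ℕ) (np : ℕ → ℕ) :
    (Apoly r np).natDegree = nHom r np - dTot r np := by
  rw [Apoly, natDegree_prod]
  · rw [nHom_eq]
    rw [Nat.add_sub_cancel_left]
    apply Finset.sum_congr rfl
    intro p hp
    simp at hp
    rw [natDegree_pow, geomS_natDegree p (by omega), mul_comm]
  · intro p hp
    exact ((geomS_monic p (by simp at hp; omega)).pow _).ne_zero

lemma Ppoly_eq (r : ℕ) (np : ℕ → ℕ) :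
    Ppoly r np = (1 - X)^(dTot r np) * Apoly r np := by
  have key : ∀ p : ℕ, (1 : ℚ[X]) - X ^ p = (1 - X) * ∑ j ∈ Finset.range p, X^j := by
    intro p
    have := geom_sum_mul (X : ℚ[X]) p
    linear_combination this
  rw [Ppoly]
  calc ∏ p ∈ Finset.Icc 1 r, ((1:ℚ[X]) - X ^ p) ^ np p
      = ∏ p ∈ Finset.Icc 1 r, ((1 - X) ^ np p * (∑ j ∈ Finset.range p, X^j) ^ np p) := by
        apply Finset.prod_congr rfl; intro p _; rw [key p, mul_pow]
    _ = (∏ p ∈ Finset.Icc 1 r, ((1:ℚ[X]) - X) ^ np p) *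
          ∏ p ∈ Finset.Icc 1 r, (∑ j ∈ Finset.range p, X^j) ^ np p := Finset.prod_mul_distrib
    _ = (1 - X)^(dTot r np) * Apoly r np := by
        congr 1
        · rw [Finset.prod_pow_eq_pow_sum]; rfl
        · rw [Apoly]
          symm
          apply Finset.prod_subset
          · intro x hx; simp at hx ⊢; omega
          · intro x hx hx2
            simp at hx hx2
            have : x = 1 := by omega
            simp [this]

lemma one_sub_X_pow_natDegree (d : ℕ) : ((1 - (X:ℚ[X]))^d).natDegree = d := by
  have h1 : (1 - (X:ℚ[X])) = -(X - C 1) := by simp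
  rw [h1, natDegree_pow, natDegree_neg, natDegree_X_sub_C, mul_one]

lemma Ppoly_natDegree (r : ℕ) (np : ℕ → ℕ) : (Ppoly r np).natDegree = nHom r np := by
  rw [Ppoly_eq, natDegree_mul, one_sub_X_pow_natDegree, Apoly_natDegree]
  · have := dTot_le_nHom r np; omega
  · apply pow_ne_zero
    intro hc
    have := congrArg (fun q => Polynomial.coeff q 0) hc
    simp at this
  · exact (Apoly_monic r np).ne_zero

lemma Ppoly_ne_zero (r : ℕ) (np : ℕ → ℕ) : Ppoly r np ≠ 0 := by
  rw [Ppoly_eq]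
  apply mul_ne_zero
  · apply pow_ne_zero
    intro hc
    have := congrArg (fun q => Polynomial.coeff q 0) hc
    simp at this
  · exact (Apoly_monic r np).ne_zero

lemma card_filter_eq (r : ℕ) (np : ℕ → ℕ)
    (h : (Ppoly r np).support.card = dTot r np + 1) :
    ((Finset.range (nHom r np + 1)).filter fun j => (Ppoly r np).coeff j = 0).card =
      nHom r np - dTot r np := by
  have hsub : (Ppoly r np).support ⊆ Finset.range (nHom r np + 1) := by
    intro k hk
    rw [Finset.mem_range]
    have := le_natDegree_of_mem_supp k hk
    rw [Ppoly_natDegree] at this; omega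
  have he : ((Finset.range (nHom r np + 1)).filter fun j => (Ppoly r np).coeff j = 0)
      = Finset.range (nHom r np + 1) \ (Ppoly r np).support := by
    ext k
    simp [Finset.mem_filter, Finset.mem_sdiff, mem_support_iff]
  rw [he, Finset.card_sdiff_of_subset hsub, Finset.card_range, h]
  have := dTot_le_nHom r np
  omega

lemma Ppoly_coeff (r : ℕ) (np : ℕ → ℕ) (j : ℕ) :
    (Ppoly r np).coeff j = ∑ l ∈ Finset.range (j+1),
      aCoeff r np l * ((-1)^(j-l) * ((dTot r np).choose (j-l) : ℚ)) := by
  rw [Ppoly_eq, mul_comm, coeff_mul, Finset.Nat.sum_antidiagonal_eq_sum_range_succ_mk]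
  apply Finset.sum_congr rfl
  intro l _
  rw [coeff_one_sub_X_pow]
  rfl

lemma main_id (r : ℕ) (np : ℕ → ℕ) (j : ℕ) (hj : j ≤ nHom r np) :
    ((dTot r np).factorial : ℚ) * cVal r np j =
      (-1)^j * (j.factorial : ℚ) * ((nHom r np - j).factorial : ℚ) * (Ppoly r np).coeff j := by
  have hdn : dTot r np ≤ nHom r np := dTot_le_nHom r np
  set d := dTot r np with hd
  set n := nHom r np with hn
  rw [cVal, Ppoly_coeff, Finset.mul_sum, Finset.mul_sum]
  set m := min (n - d) j with hm
  have hL : ∑ l ∈ Finset.range (n - d + 1), (d.factorial : ℚ) * (aCoeff r np l * Qval r np l j)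
      = ∑ l ∈ Finset.range (m + 1), (d.factorial : ℚ) * (aCoeff r np l * Qval r np l j) := by
    symm
    apply Finset.sum_subset (Finset.range_subset_range.2 (by omega))
    intro l hl hlm
    simp only [Finset.mem_range] at hl hlm
    have hjl : j < l := by omega
    have hq : Qval r np l (j : ℚ) = 0 := by
      rw [Qval]
      apply mul_eq_zero_of_left
      apply Finset.prod_eq_zero (Finset.mem_range.2 hjl)
      simp
    rw [hq]; ring
  have hR : ∑ l ∈ Finset.range (j + 1), (-1:ℚ)^j * (j.factorial : ℚ) * ((n - j).factorial : ℚ) *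
        (aCoeff r np l * ((-1)^(j-l) * (d.choose (j-l) : ℚ)))
      = ∑ l ∈ Finset.range (m + 1), (-1:ℚ)^j * (j.factorial : ℚ) * ((n - j).factorial : ℚ) *
        (aCoeff r np l * ((-1)^(j-l) * (d.choose (j-l) : ℚ))) := by
    symm
    apply Finset.sum_subset (Finset.range_subset_range.2 (by omega))
    intro l hl hlm
    simp only [Finset.mem_range] at hl hlm
    have ha : aCoeff r np l = 0 := by
      rw [aCoeff]
      apply coeff_eq_zero_of_natDegree_lt
      rw [Apoly_natDegree]
      omega
    rw [ha]; ring
  rw [hL, hR]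
  apply Finset.sum_congr rfl
  intro l hl
  simp only [Finset.mem_range] at hl
  have hlj : l ≤ j := by omega
  have hlnd : l ≤ n - d := by omega
  have hQ : (d.factorial : ℚ) * Qval r np l j =
      (-1:ℚ)^j * (j.factorial : ℚ) * ((n - j).factorial : ℚ) *
        ((-1)^(j-l) * (d.choose (j-l) : ℚ)) := by
    rcases le_or_gt j (d + l) with hjd | hjd
    · have hP1 := aux1 l j hlj
      have hP2 := aux2 j (d + l) hjd n (by omega)
      have hsign : (∏ mm ∈ Finset.range l, ((mm:ℚ) - j))
          = (-1)^l * ∏ mm ∈ Finset.range l, ((j:ℚ) - mm) := by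
        calc (∏ mm ∈ Finset.range l, ((mm:ℚ) - j))
            = ∏ mm ∈ Finset.range l, ((-1) * ((j:ℚ) - mm)) := by
              apply Finset.prod_congr rfl; intro mm _; ring
          _ = (-1)^l * ∏ mm ∈ Finset.range l, ((j:ℚ) - mm) := by
              rw [Finset.prod_mul_distrib, Finset.prod_const, Finset.card_range]
      have hch : ((d.choose (j-l)) : ℚ) * ((j-l).factorial : ℚ) * ((d + l - j).factorial : ℚ)
          = (d.factorial : ℚ) := by
        have h0 := Nat.choose_mul_factorial_mul_factorial (show j - l ≤ d by omega)
        have h2 : d - (j - l) = d + l - j := by omega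
        rw [h2] at h0
        exact_mod_cast congrArg (Nat.cast : ℕ → ℚ) h0
      have key : (d.factorial : ℚ) * ((∏ mm ∈ Finset.range l, ((j:ℚ) - mm)) *
            ∏ mm ∈ Finset.Icc (d + l + 1) n, ((mm:ℚ) - j))
          = (j.factorial : ℚ) * ((n - j).factorial : ℚ) * (d.choose (j-l) : ℚ) := by
        rw [← hch, ← hP1, ← hP2]; ring
      have hs3 : (-1:ℚ)^j * (-1:ℚ)^(j-l) = (-1:ℚ)^l := by
        have h1 : (-1:ℚ)^j = (-1:ℚ)^(j-l) * (-1:ℚ)^l := by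
          rw [← pow_add]; congr 1; omega
        have h2 : (-1:ℚ)^(j-l) * (-1:ℚ)^(j-l) = 1 := by
          rw [← pow_add, ← two_mul, pow_mul]; norm_num
        calc (-1:ℚ)^j * (-1:ℚ)^(j-l)
            = ((-1:ℚ)^(j-l) * (-1:ℚ)^(j-l)) * (-1:ℚ)^l := by rw [h1]; ring
          _ = (-1:ℚ)^l := by rw [h2]; ring
      rw [Qval, hsign, ← hd, ← hn]
      linear_combination ((-1:ℚ)^l) * key -
        ((j.factorial : ℚ) * ((n - j).factorial : ℚ) * (d.choose (j-l) : ℚ)) * hs3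
    · have hq : Qval r np l (j : ℚ) = 0 := by
        rw [Qval]
        apply mul_eq_zero_of_right
        apply Finset.prod_eq_zero (show j ∈ Finset.Icc (dTot r np + l + 1) (nHom r np) by
          rw [Finset.mem_Icc, ← hd, ← hn]; omega)
        simp
      have hC0 : d.choose (j - l) = 0 := Nat.choose_eq_zero_of_lt (by omega)
      rw [hq, hC0]
      simp
  linear_combination (aCoeff r np l) * hQ

lemma prod_CmX (s : Finset ℕ) :
    (∏ m ∈ s, (C (m:ℚ) - X)) = (-1)^s.card * ∏ m ∈ s, (X - C (m:ℚ)) := by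
  calc (∏ m ∈ s, (C (m:ℚ) - X)) = ∏ m ∈ s, ((-1) * (X - C (m:ℚ))) := by
        apply Finset.prod_congr rfl; intro mm _; ring
    _ = (-1)^s.card * ∏ m ∈ s, (X - C (m:ℚ)) := by
        rw [Finset.prod_mul_distrib, Finset.prod_const]

lemma prodX_monic (s : Finset ℕ) : (∏ m ∈ s, (X - C (m:ℚ))).Monic :=
  monic_prod_of_monic _ _ fun m _ => monic_X_sub_C _

lemma prodX_natDegree (s : Finset ℕ) : (∏ m ∈ s, (X - C (m:ℚ))).natDegree = s.card := by
  rw [natDegree_prod (s := s) (f := fun m => X - C (m:ℚ)) (fun m _ => (monic_X_sub_C (m:ℚ)).ne_zero),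
    Finset.sum_congr rfl (fun m _ => natDegree_X_sub_C _), Finset.sum_const, smul_eq_mul, mul_one]

lemma neg_one_pow_C (k : ℕ) : ((-1 : ℚ[X]))^k = C ((-1)^k) := by
  rw [map_pow, map_neg, map_one]

lemma sum_aCoeff (r : ℕ) (np : ℕ → ℕ) :
    ∑ l ∈ Finset.range (nHom r np - dTot r np + 1), aCoeff r np l
      = ∏ p ∈ Finset.Icc 2 r, (p:ℚ) ^ np p := by
  have h1 : (Apoly r np).eval 1 = ∑ l ∈ Finset.range (nHom r np - dTot r np + 1),
      aCoeff r np l := by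
    rw [eval_eq_sum_range, Apoly_natDegree]
    simp [aCoeff]
  rw [← h1, Apoly, eval_prod]
  apply Finset.prod_congr rfl
  intro p _
  rw [eval_pow]
  congr 1
  rw [eval_finset_sum]
  simp

theorem stmt3_part2 (r : ℕ) (hr : 1 ≤ r) (np : ℕ → ℕ)
    (h : (Ppoly r np).support.card = dTot r np + 1)
    (part3 : ∀ j ∈ (Finset.range (nHom r np + 1)).filter
        (fun j => (Ppoly r np).coeff j = 0), cVal r np (j : ℚ) = 0) :
    ∀ i : ℚ,
        cVal r np i =
          (∏ p ∈ Finset.Icc 2 r, (p : ℚ) ^ np p) *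
            ∏ j ∈ (Finset.range (nHom r np + 1)).filter fun j => (Ppoly r np).coeff j = 0,
              ((j : ℚ) - i) := by
  have hdn := dTot_le_nHom r np
  set d := dTot r np with hd
  set n := nHom r np with hn
  set T := (Finset.range (n + 1)).filter (fun j => (Ppoly r np).coeff j = 0) with hT
  set K := ∏ p ∈ Finset.Icc 2 r, (p:ℚ) ^ np p with hK
  have hcardT : T.card = n - d := card_filter_eq r np h
  set Cq : ℚ[X] := ∑ l ∈ Finset.range (n - d + 1), C (aCoeff r np l) *
      ((∏ m ∈ Finset.range l, (C (m:ℚ) - X)) *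
        ∏ m ∈ Finset.Icc (d + l + 1) n, (C (m:ℚ) - X)) with hCq
  set Rq : ℚ[X] := C K * ∏ j ∈ T, (C (j:ℚ) - X) with hRq
  have hCeval : ∀ i : ℚ, Cq.eval i = cVal r np i := by
    intro i
    rw [hCq, cVal, eval_finset_sum]
    apply Finset.sum_congr rfl
    intro l _
    rw [Qval]
    simp [eval_prod, hd, hn]
  have hReval : ∀ i : ℚ, Rq.eval i = K * ∏ j ∈ T, ((j:ℚ) - i) := by
    intro i
    rw [hRq]
    simp [eval_prod]
  -- rewrite each summand of Cq in normal form
  have hfl : ∀ l ∈ Finset.range (n - d + 1),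
      C (aCoeff r np l) * ((∏ m ∈ Finset.range l, (C (m:ℚ) - X)) *
        ∏ m ∈ Finset.Icc (d + l + 1) n, (C (m:ℚ) - X))
      = C (aCoeff r np l * (-1)^(n-d)) *
        ((∏ m ∈ Finset.range l, (X - C (m:ℚ))) *
          ∏ m ∈ Finset.Icc (d + l + 1) n, (X - C (m:ℚ))) := by
    intro l hl
    simp only [Finset.mem_range] at hl
    have hcard2 : (Finset.Icc (d + l + 1) n).card = n - d - l := by
      rw [Nat.card_Icc]; omega
    rw [prod_CmX, prod_CmX, Finset.card_range, hcard2, C_mul]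
    have hp : ((-1:ℚ[X]))^l * (-1)^(n - d - l) = C ((-1)^(n-d)) := by
      rw [← neg_one_pow_C, ← pow_add]; congr 1; omega
    linear_combination (C (aCoeff r np l) * (∏ m ∈ Finset.range l, (X - C (m:ℚ))) *
      ∏ m ∈ Finset.Icc (d + l + 1) n, (X - C (m:ℚ))) * hp
  have hMl : ∀ l, ((∏ m ∈ Finset.range l, (X - C (m:ℚ))) *
      ∏ m ∈ Finset.Icc (d + l + 1) n, (X - C (m:ℚ))).Monic :=
    fun l => (prodX_monic _).mul (prodX_monic _)
  have hMdeg : ∀ l ∈ Finset.range (n - d + 1),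
      ((∏ m ∈ Finset.range l, (X - C (m:ℚ))) *
        ∏ m ∈ Finset.Icc (d + l + 1) n, (X - C (m:ℚ))).natDegree = n - d := by
    intro l hl
    simp only [Finset.mem_range] at hl
    rw [(prodX_monic _).natDegree_mul (prodX_monic _), prodX_natDegree, prodX_natDegree,
      Finset.card_range, Nat.card_Icc]
    omega
  have e1 : Cq = ∑ l ∈ Finset.range (n - d + 1), C (aCoeff r np l * (-1)^(n-d)) *
      ((∏ m ∈ Finset.range l, (X - C (m:ℚ))) *
        ∏ m ∈ Finset.Icc (d + l + 1) n, (X - C (m:ℚ))) := by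
    rw [hCq]; exact Finset.sum_congr rfl hfl
  have hCq_coeff : Cq.coeff (n - d) = (-1)^(n-d) * K := by
    have hterm : ∀ l ∈ Finset.range (n - d + 1),
        (C (aCoeff r np l * (-1)^(n-d)) *
          ((∏ m ∈ Finset.range l, (X - C (m:ℚ))) *
            ∏ m ∈ Finset.Icc (d + l + 1) n, (X - C (m:ℚ)))).coeff (n - d)
        = aCoeff r np l * (-1)^(n-d) := by
      intro l hl
      have hMc : ((∏ m ∈ Finset.range l, (X - C (m:ℚ))) *
          ∏ m ∈ Finset.Icc (d + l + 1) n, (X - C (m:ℚ))).coeff (n - d) = 1 := by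
        rw [← hMdeg l hl]; exact (hMl l).coeff_natDegree
      rw [coeff_C_mul, hMc, mul_one]
    rw [e1, finset_sum_coeff, Finset.sum_congr rfl hterm, ← Finset.sum_mul]
    have hs := sum_aCoeff r np
    rw [← hd, ← hn] at hs
    rw [hs]; ring
  have hCdeg : Cq.natDegree ≤ n - d := by
    rw [e1]
    apply natDegree_sum_le_of_forall_le
    intro l hl
    refine le_trans (natDegree_C_mul_le _ _) ?_
    rw [hMdeg l hl]
  have hRdeg : Rq.natDegree ≤ n - d := by
    rw [hRq, prod_CmX, neg_one_pow_C]
    refine le_trans (natDegree_C_mul_le _ _) ?_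
    refine le_trans (natDegree_C_mul_le _ _) ?_
    rw [prodX_natDegree, hcardT]
  have hRcoeff : Rq.coeff (n - d) = K * (-1)^(n-d) := by
    have h1 : (∏ j ∈ T, (X - C (j:ℚ))).coeff (n-d) = 1 := by
      conv_lhs => rw [show n - d = (∏ j ∈ T, (X - C (j:ℚ))).natDegree by
        rw [prodX_natDegree, hcardT]]
      exact (prodX_monic T).coeff_natDegree
    rw [hRq, prod_CmX, neg_one_pow_C, hcardT, coeff_C_mul, coeff_C_mul, h1, mul_one]
  have hDcoeff : (Cq - Rq).coeff (n-d) = 0 := by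
    rw [coeff_sub, hCq_coeff, hRcoeff]; ring
  have hDdeg : (Cq - Rq).natDegree ≤ n - d :=
    le_trans (natDegree_sub_le _ _) (max_le hCdeg hRdeg)
  have hDeval : ∀ j ∈ T, (Cq - Rq).eval (j:ℚ) = 0 := by
    intro j hj
    rw [eval_sub, hCeval, hReval, part3 j hj]
    have : (∏ t ∈ T, ((t:ℚ) - (j:ℚ))) = 0 :=
      Finset.prod_eq_zero hj (by simp)
    rw [this, mul_zero, sub_zero]
  have hD0 : Cq - Rq = 0 := by
    rcases Nat.eq_zero_or_pos (n - d) with h0 | hpos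
    · have hle : (Cq - Rq).natDegree ≤ 0 := by omega
      rw [eq_C_of_natDegree_le_zero hle]
      rw [h0] at hDcoeff
      rw [hDcoeff, map_zero]
    · apply Polynomial.eq_zero_of_natDegree_lt_card_of_eval_eq_zero' (Cq - Rq)
        (T.image (Nat.cast : ℕ → ℚ))
      · intro i hi
        simp only [Finset.mem_image] at hi
        obtain ⟨j, hj, rfl⟩ := hi
        exact hDeval j hj
      · rw [Finset.card_image_of_injective _ Nat.cast_injective, hcardT]
        rcases eq_or_lt_of_le hDdeg with heq | hlt
        · by_cases hDz : Cq - Rq = 0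
          · rw [hDz]; simpa using hpos
          · exfalso
            have hlc := leadingCoeff_ne_zero.2 hDz
            rw [leadingCoeff, heq] at hlc
            exact hlc hDcoeff
        · exact hlt
  have hCR : Cq = Rq := sub_eq_zero.1 hD0
  intro i
  rw [← hCeval i, hCR, hReval i]

/-- If `P` has exactly `d+1` nonzero coefficients and `𝒫′ ⊆ {0,…,n}` is the set of
exponents whose coefficient in `P` vanishes, then `𝒫′` has `n − d` elements,
`c(i) = 2^{n₂}·3^{n₃}⋯r^{n_r} · ∏_{j ∈ 𝒫′} (j − i)` as polynomial functions of `i`,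
and in particular the elements of `𝒫′` are `n − d` mutually different integral zeros of `c`
located in `{0,…,n}`. -/
theorem stmt3 (r : ℕ) (hr : 1 ≤ r) (np : ℕ → ℕ)
    (h : (Ppoly r np).support.card = dTot r np + 1) :
    ((Finset.range (nHom r np + 1)).filter fun j => (Ppoly r np).coeff j = 0).card =
        nHom r np - dTot r np ∧
      (∀ i : ℚ,
        cVal r np i =
          (∏ p ∈ Finset.Icc 2 r, (p : ℚ) ^ np p) *
            ∏ j ∈ (Finset.range (nHom r np + 1)).filter fun j => (Ppoly r np).coeff j = 0,
              ((j : ℚ) - i)) ∧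
      ∀ j ∈ (Finset.range (nHom r np + 1)).filter fun j => (Ppoly r np).coeff j = 0,
        cVal r np (j : ℚ) = 0 := by
  have part3 : ∀ j ∈ (Finset.range (nHom r np + 1)).filter
      (fun j => (Ppoly r np).coeff j = 0), cVal r np (j : ℚ) = 0 := by
    intro j hj
    simp only [Finset.mem_filter, Finset.mem_range] at hj
    have hid := main_id r np j (by omega)
    rw [hj.2, mul_zero] at hid
    have hfac : (((dTot r np).factorial : ℚ)) ≠ 0 :=
      Nat.cast_ne_zero.2 (Nat.factorial_ne_zero _)
    rcases mul_eq_zero.1 hid with hc | hc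
    · exact absurd hc hfac
    · exact hc
  exact ⟨card_filter_eq r np h, stmt3_part2 r hr np h part3, part3⟩
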